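/- Fix d ≥ 2 and let θ ∈ ℝ^{d+1} lie on the upper unit hyperboloid sheet, i.e. θ₀ = √(1 + θ₁² + ⋯ + θ_d²). Then the hyperboloid distributions P_{tθ} converge weakly, as t → +∞, to the Dirac measure δ_{(θ₁,…,θ_d)} at the point (θ₁,…,θ_d) ∈ ℝ^d; equivalently, for every bounded continuous function φ : ℝ^d → ℝ, ∫ φ dP_{tθ} → φ(θ₁,…,θ_d) as t → +∞. -/

import Mathlib

open MeasureTheory

/-- The Minkowski inner product on ℝ^{d+1}: [x,y] = x₀y₀ − x₁y₁ − ⋯ − x_d y_d. -/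
noncomputable def mink {d : ℕ} (x y : Fin (d + 1) → ℝ) : ℝ :=
  x 0 * y 0 - ∑ i : Fin d, x i.succ * y i.succ

/-- The parameter space Θ = {θ : θ₀ > √(θ₁² + ⋯ + θ_d²)}. -/
def hypParam (d : ℕ) : Set (Fin (d + 1) → ℝ) :=
  {θ | Real.sqrt (∑ i : Fin d, θ i.succ ^ 2) < θ 0}

/-- The upper unit hyperboloid sheet L^d. -/
def hypSheet (d : ℕ) : Set (Fin (d + 1) → ℝ) :=
  {x | mink x x = 1 ∧ 0 < x 0}

/-- SO₀(1,d): determinant-one matrices preserving the Minkowski inner product and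
mapping the upper hyperboloid sheet onto itself. -/
def SOplus (d : ℕ) : Set (Matrix (Fin (d + 1)) (Fin (d + 1)) ℝ) :=
  {A | A.det = 1 ∧ (∀ x y, mink (A.mulVec x) (A.mulVec y) = mink x y) ∧
    A.mulVec '' hypSheet d = hypSheet d}

/-- The lift x̃ = (√(1+‖x‖²), x) of a point x ∈ ℝ^d to the hyperboloid. -/
noncomputable def hypLift {d : ℕ} (x : Fin d → ℝ) : Fin (d + 1) → ℝ :=
  Fin.cons (Real.sqrt (1 + ∑ i, x i ^ 2)) x

/-- The unnormalized density of the hyperboloid distribution. -/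
noncomputable def hypKernel {d : ℕ} (θ : Fin (d + 1) → ℝ) (x : Fin d → ℝ) : ℝ :=
  Real.exp (-mink θ (hypLift x)) / Real.sqrt (1 + ∑ i, x i ^ 2)

/-- The normalizing constant of the hyperboloid distribution. -/
noncomputable def hypZ (d : ℕ) (θ : Fin (d + 1) → ℝ) : ℝ :=
  ∫ x : Fin d → ℝ, hypKernel θ x

/-- The density of the hyperboloid distribution P_θ on ℝ^d. -/
noncomputable def hypDensity (d : ℕ) (θ : Fin (d + 1) → ℝ) (x : Fin d → ℝ) : ℝ :=
  hypKernel θ x / hypZ d θ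

/-- The hyperboloid distribution P_θ as a Borel measure on ℝ^d. -/
noncomputable def hypMeasure (d : ℕ) (θ : Fin (d + 1) → ℝ) : Measure (Fin d → ℝ) :=
  volume.withDensity fun x => ENNReal.ofReal (hypDensity d θ x)

namespace HB

variable {d : ℕ}

noncomputable def sF (x : Fin d → ℝ) : ℝ := Real.sqrt (1 + ∑ i, x i ^ 2)

lemma sumsq_nonneg (x : Fin d → ℝ) : 0 ≤ ∑ i, x i ^ 2 :=
  Finset.sum_nonneg fun _ _ => sq_nonneg _

lemma one_le_sF (x : Fin d → ℝ) : 1 ≤ sF x := by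
  rw [sF, Real.one_le_sqrt]
  linarith [sumsq_nonneg x]

lemma sF_pos (x : Fin d → ℝ) : 0 < sF x := lt_of_lt_of_le one_pos (one_le_sF x)

lemma sq_sF (x : Fin d → ℝ) : sF x ^ 2 = 1 + ∑ i, x i ^ 2 :=
  Real.sq_sqrt (by positivity)

lemma continuous_sF : Continuous (sF (d := d)) :=
  (continuous_const.add (continuous_finset_sum _ fun i _ => (continuous_apply i).pow 2)).sqrt

lemma cs (f g : Fin d → ℝ) :
    ∑ i, f i * g i ≤ Real.sqrt (∑ i, f i ^ 2) * Real.sqrt (∑ i, g i ^ 2) := by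
  have h := Finset.sum_mul_sq_le_sq_mul_sq Finset.univ f g
  have h2 : Real.sqrt ((∑ i, f i * g i) ^ 2) ≤
      Real.sqrt ((∑ i, f i ^ 2) * ∑ i, g i ^ 2) := Real.sqrt_le_sqrt h
  rw [Real.sqrt_sq_eq_abs, Real.sqrt_mul (sumsq_nonneg f)] at h2
  exact (le_abs_self _).trans h2

lemma sum_sub_sq (x y : Fin d → ℝ) :
    ∑ i, (x i - y i) ^ 2 = (∑ i, x i ^ 2) + (∑ i, y i ^ 2) - 2 * ∑ i, x i * y i := by
  rw [Finset.mul_sum, ← Finset.sum_add_distrib, ← Finset.sum_sub_distrib]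
  exact Finset.sum_congr rfl fun i _ => by ring

lemma one_add_inner_le (x y : Fin d → ℝ) : 1 + ∑ i, x i * y i ≤ sF x * sF y := by
  have hu0 : 0 ≤ Real.sqrt (∑ i, x i ^ 2) := Real.sqrt_nonneg _
  have hv0 : 0 ≤ Real.sqrt (∑ i, y i ^ 2) := Real.sqrt_nonneg _
  have hu2 : Real.sqrt (∑ i, x i ^ 2) ^ 2 = ∑ i, x i ^ 2 := Real.sq_sqrt (sumsq_nonneg x)
  have hv2 : Real.sqrt (∑ i, y i ^ 2) ^ 2 = ∑ i, y i ^ 2 := Real.sq_sqrt (sumsq_nonneg y)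
  have hx2 : sF x ^ 2 = 1 + Real.sqrt (∑ i, x i ^ 2) ^ 2 := by rw [sq_sF, hu2]
  have hy2 : sF y ^ 2 = 1 + Real.sqrt (∑ i, y i ^ 2) ^ 2 := by rw [sq_sF, hv2]
  have hcs : ∑ i, x i * y i ≤ Real.sqrt (∑ i, x i ^ 2) * Real.sqrt (∑ i, y i ^ 2) := cs x y
  have hx1 : 1 ≤ sF x := one_le_sF x
  have hy1 : 1 ≤ sF y := one_le_sF y
  have hS1 : 1 ≤ sF x * sF y := by nlinarith
  have h0 : (sF x * sF y) ^ 2 =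
      (1 + Real.sqrt (∑ i, x i ^ 2) ^ 2) * (1 + Real.sqrt (∑ i, y i ^ 2) ^ 2) := by
    rw [mul_pow, hx2, hy2]
  have h1 : 1 + Real.sqrt (∑ i, x i ^ 2) * Real.sqrt (∑ i, y i ^ 2) ≤ sF x * sF y := by
    nlinarith [sq_nonneg (Real.sqrt (∑ i, x i ^ 2) - Real.sqrt (∑ i, y i ^ 2)),
      mul_nonneg hu0 hv0]
  linarith

lemma sF_lip (x y : Fin d → ℝ) : (sF x - sF y) ^ 2 ≤ ∑ i, (x i - y i) ^ 2 := by
  have h := one_add_inner_le x y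
  have hx2 := sq_sF x
  have hy2 := sq_sF y
  rw [sum_sub_sq]
  nlinarith

lemma sF_upper (x y : Fin d → ℝ) : sF x ≤ sF y + Real.sqrt (∑ i, (x i - y i) ^ 2) := by
  have h := sF_lip x y
  have h2 : sF x - sF y ≤ Real.sqrt (∑ i, (x i - y i) ^ 2) := by
    calc sF x - sF y ≤ |sF x - sF y| := le_abs_self _
      _ = Real.sqrt ((sF x - sF y) ^ 2) := (Real.sqrt_sq_eq_abs _).symm
      _ ≤ _ := Real.sqrt_le_sqrt h
  linarith

lemma norm_le_sqrt (x : Fin d → ℝ) : ‖x‖ ≤ Real.sqrt (∑ i, x i ^ 2) := by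
  rw [pi_norm_le_iff_of_nonneg (Real.sqrt_nonneg _)]
  intro i
  rw [Real.norm_eq_abs, ← Real.sqrt_sq_eq_abs]
  exact Real.sqrt_le_sqrt
    (Finset.single_le_sum (fun j _ => sq_nonneg (x j)) (Finset.mem_univ i))

/-- Key quantitative inequality (pure algebra). -/
lemma key_alg (a s A B P : ℝ) (ha : a ^ 2 = 1 + A ^ 2) (hs : s ^ 2 = 1 + B ^ 2)
    (ha1 : 1 ≤ a) (hs1 : 1 ≤ s) (hA : 0 ≤ A) (hB : 0 ≤ B) (hP : P ≤ A * B) :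
    A ^ 2 + B ^ 2 - 2 * P ≤ 2 * (a * s) * (a * s - P - 1) := by
  have has : (1:ℝ) ≤ a * s := by nlinarith
  have h0 : (a * s) ^ 2 = (1 + A ^ 2) * (1 + B ^ 2) := by rw [mul_pow, ha, hs]
  have h1 : 1 + A * B ≤ a * s := by
    nlinarith [sq_nonneg (A - B), mul_nonneg hA hB]
  nlinarith [sq_nonneg (a * s - 1 - A * B), mul_nonneg (by linarith : (0:ℝ) ≤ 2 * (a * s) - 2)
    (by linarith : (0:ℝ) ≤ A * B - P)]

/-- integrability of `exp (-(c * sF x))` on `Fin d → ℝ`. -/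
lemma integrable_exp_sF (c : ℝ) (hc : 0 < c) :
    Integrable (fun x : Fin d → ℝ => Real.exp (-(c * sF x))) := by
  have hnr : ((Module.finrank ℝ (Fin d → ℝ) : ℝ)) < (d : ℝ) + 1 := by
    rw [Module.finrank_fin_fun]; linarith
  have base : Integrable (fun x : Fin d → ℝ =>
      ((d+1).factorial * (2/c)^(d+1)) * (1 + ‖x‖) ^ (-((d : ℝ) + 1))) :=
    (integrable_one_add_norm hnr).const_mul _
  refine base.mono' ?_ (Filter.Eventually.of_forall fun x => ?_)
  · exact (Real.continuous_exp.comp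
      ((continuous_const.mul continuous_sF).neg)).aestronglyMeasurable
  · have hu : (0:ℝ) < 1 + ‖x‖ := by positivity
    have hxle : ‖x‖ ≤ sF x := (norm_le_sqrt x).trans
      (Real.sqrt_le_sqrt (by linarith [sumsq_nonneg x]))
    have hhalf : (1 + ‖x‖) / 2 ≤ sF x := by
      have := one_le_sF x; linarith
    have h2 : Real.exp (-(c * sF x)) ≤ Real.exp (-(c/2 * (1 + ‖x‖))) := by
      apply Real.exp_le_exp.2; nlinarith
    have h3 : (c/2 * (1 + ‖x‖)) ^ (d+1) / (d+1).factorial ≤ Real.exp (c/2 * (1 + ‖x‖)) :=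
      Real.pow_div_factorial_le_exp (x := c/2 * (1 + ‖x‖)) (by positivity) (d+1)
    have hpos : (0:ℝ) < (c/2 * (1 + ‖x‖)) ^ (d+1) / (d+1).factorial := by positivity
    have h4 : Real.exp (-(c/2 * (1 + ‖x‖))) ≤
        ((c/2 * (1 + ‖x‖)) ^ (d+1) / (d+1).factorial)⁻¹ := by
      rw [Real.exp_neg]
      exact inv_anti₀ hpos h3
    have h5 : ((c/2 * (1 + ‖x‖)) ^ (d+1) / (d+1).factorial)⁻¹ =
        ((d+1).factorial * (2/c)^(d+1)) * (1 + ‖x‖) ^ (-((d : ℝ) + 1)) := by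
      have : (1 + ‖x‖) ^ (-((d : ℝ) + 1)) = ((1 + ‖x‖) ^ (d+1))⁻¹ := by
        rw [show -((d : ℝ) + 1) = -((d+1 : ℕ) : ℝ) by push_cast; ring,
          Real.rpow_neg hu.le, Real.rpow_natCast]
      rw [this, mul_pow]
      have hfac : (0:ℝ) < (d+1).factorial := by positivity
      have hc0 : c ≠ 0 := hc.ne'
      field_simp
      rw [← mul_pow, div_mul_div_comm, mul_comm c 2, div_self (mul_ne_zero two_ne_zero hc0),
        one_pow]
    rw [Real.norm_eq_abs, abs_of_pos (Real.exp_pos _)]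
    calc Real.exp (-(c * sF x)) ≤ _ := h2
      _ ≤ _ := h4
      _ = _ := by rw [h5]

/-! Now the hyperboloid-specific functions. -/

noncomputable def gF (θ : Fin (d+1) → ℝ) (x : Fin d → ℝ) : ℝ :=
  θ 0 * sF x - ∑ i, θ i.succ * x i

noncomputable def fK (θ : Fin (d+1) → ℝ) (t : ℝ) (x : Fin d → ℝ) : ℝ :=
  Real.exp (-(t * gF θ x)) / sF x

lemma fK_pos (θ : Fin (d+1) → ℝ) (t : ℝ) (x : Fin d → ℝ) : 0 < fK θ t x :=
  div_pos (Real.exp_pos _) (sF_pos x)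

lemma continuous_gF (θ : Fin (d+1) → ℝ) : Continuous (gF θ) := by
  apply Continuous.sub (continuous_const.mul continuous_sF)
  exact continuous_finset_sum _ fun i _ => continuous_const.mul (continuous_apply i)

lemma continuous_fK (θ : Fin (d+1) → ℝ) (t : ℝ) : Continuous (fK θ t) := by
  apply Continuous.div
  · exact Real.continuous_exp.comp ((continuous_const.mul (continuous_gF θ)).neg)
  · exact continuous_sF
  · exact fun x => (sF_pos x).ne'

section withθ

variable {θ : Fin (d+1) → ℝ} (hθ : θ 0 = Real.sqrt (1 + ∑ i : Fin d, θ i.succ ^ 2))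
include hθ

lemma a_sq : θ 0 ^ 2 = 1 + ∑ i : Fin d, θ i.succ ^ 2 := by
  rw [hθ]; exact Real.sq_sqrt (by positivity)

lemma one_le_a : 1 ≤ θ 0 := by
  rw [hθ, Real.one_le_sqrt]
  exact le_add_of_nonneg_right (Finset.sum_nonneg fun _ _ => sq_nonneg _)

lemma A_lt_a : Real.sqrt (∑ i : Fin d, θ i.succ ^ 2) < θ 0 := by
  have h1 := a_sq hθ
  have h2 : Real.sqrt (∑ i : Fin d, θ i.succ ^ 2) ^ 2 = ∑ i : Fin d, θ i.succ ^ 2 :=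
    Real.sq_sqrt (Finset.sum_nonneg fun _ _ => sq_nonneg _)
  have h3 : 0 ≤ Real.sqrt (∑ i : Fin d, θ i.succ ^ 2) := Real.sqrt_nonneg _
  have h4 := one_le_a hθ
  nlinarith

lemma sF_at : sF (fun i => θ i.succ) = θ 0 := by
  rw [hθ]; simp only [sF]

lemma gF_at : gF θ (fun i => θ i.succ) = 1 := by
  have h1 := a_sq hθ
  have h2 : ∑ i : Fin d, θ i.succ * θ i.succ = ∑ i : Fin d, θ i.succ ^ 2 :=
    Finset.sum_congr rfl fun i _ => (sq (θ i.succ)).symm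
  simp only [gF, sF_at hθ, h2]
  nlinarith

omit hθ in
lemma gF_lower (x : Fin d → ℝ) :
    (θ 0 - Real.sqrt (∑ i : Fin d, θ i.succ ^ 2)) * sF x ≤ gF θ x := by
  have h1 : ∑ i, θ i.succ * x i ≤
      Real.sqrt (∑ i : Fin d, θ i.succ ^ 2) * Real.sqrt (∑ i, x i ^ 2) :=
    cs (fun i => θ i.succ) x
  have h2 : Real.sqrt (∑ i, x i ^ 2) ≤ sF x :=
    Real.sqrt_le_sqrt (by linarith [sumsq_nonneg x])
  have h3 : 0 ≤ Real.sqrt (∑ i : Fin d, θ i.succ ^ 2) := Real.sqrt_nonneg _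
  have h4 : Real.sqrt (∑ i : Fin d, θ i.succ ^ 2) * Real.sqrt (∑ i, x i ^ 2) ≤
      Real.sqrt (∑ i : Fin d, θ i.succ ^ 2) * sF x := mul_le_mul_of_nonneg_left h2 h3
  simp only [gF]
  nlinarith [sF_pos x]

lemma gF_quad (x : Fin d → ℝ) :
    ∑ i, (x i - θ i.succ) ^ 2 ≤ 2 * (θ 0 * sF x) * (gF θ x - 1) := by
  have hA2 : Real.sqrt (∑ i : Fin d, θ i.succ ^ 2) ^ 2 = ∑ i : Fin d, θ i.succ ^ 2 :=
    Real.sq_sqrt (Finset.sum_nonneg fun _ _ => sq_nonneg _)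
  have hB2 : Real.sqrt (∑ i, x i ^ 2) ^ 2 = ∑ i, x i ^ 2 := Real.sq_sqrt (sumsq_nonneg x)
  have hkey := key_alg (θ 0) (sF x) (Real.sqrt (∑ i : Fin d, θ i.succ ^ 2))
    (Real.sqrt (∑ i, x i ^ 2)) (∑ i, θ i.succ * x i)
    (by rw [hA2]; exact a_sq hθ) (by rw [hB2]; exact sq_sF x)
    (one_le_a hθ) (one_le_sF x) (Real.sqrt_nonneg _) (Real.sqrt_nonneg _)
    (cs (fun i => θ i.succ) x)
  rw [hA2, hB2] at hkey
  have hsum : ∑ i, (x i - θ i.succ) ^ 2 =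
      (∑ i, x i ^ 2) + (∑ i : Fin d, θ i.succ ^ 2) - 2 * ∑ i, θ i.succ * x i := by
    rw [sum_sub_sq x (fun i => θ i.succ)]
    have : ∑ i, x i * θ i.succ = ∑ i, θ i.succ * x i :=
      Finset.sum_congr rfl fun i _ => mul_comm _ _
    rw [this]
  rw [hsum]
  simp only [gF] at hkey ⊢
  linarith

lemma gF_ge_one (x : Fin d → ℝ) : 1 ≤ gF θ x := by
  have h1 := gF_quad hθ x
  have h2 : 0 ≤ ∑ i, (x i - θ i.succ) ^ 2 := Finset.sum_nonneg fun _ _ => sq_nonneg _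
  have h3 : 0 < θ 0 * sF x := mul_pos (by linarith [one_le_a hθ]) (sF_pos x)
  by_contra h
  push_neg at h
  nlinarith

lemma gF_upper (x : Fin d → ℝ) :
    gF θ x ≤ 1 + 2 * θ 0 * Real.sqrt (∑ i : Fin d, (x i - θ i.succ) ^ 2) := by
  have hA : Real.sqrt (∑ i : Fin d, θ i.succ ^ 2) < θ 0 := A_lt_a hθ
  have ha0 : (0:ℝ) < θ 0 := by linarith [one_le_a hθ]
  have hq0 : 0 ≤ Real.sqrt (∑ i : Fin d, (x i - θ i.succ) ^ 2) := Real.sqrt_nonneg _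
  have hs : sF x - sF (fun i => θ i.succ) ≤
      Real.sqrt (∑ i : Fin d, (x i - θ i.succ) ^ 2) := by
    have h := sF_lip x (fun i => θ i.succ)
    calc sF x - sF (fun i => θ i.succ) ≤ |sF x - sF (fun i => θ i.succ)| := le_abs_self _
      _ = Real.sqrt ((sF x - sF (fun i => θ i.succ)) ^ 2) := (Real.sqrt_sq_eq_abs _).symm
      _ ≤ _ := Real.sqrt_le_sqrt h
  rw [sF_at hθ] at hs
  have hlin : (∑ i : Fin d, θ i.succ * θ i.succ) - ∑ i : Fin d, θ i.succ * x i ≤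
      Real.sqrt (∑ i : Fin d, θ i.succ ^ 2) * Real.sqrt (∑ i : Fin d, (x i - θ i.succ) ^ 2) := by
    have h := cs (fun i => θ i.succ) (fun i => θ i.succ - x i)
    have heq : ∑ i : Fin d, (θ i.succ - x i) ^ 2 = ∑ i : Fin d, (x i - θ i.succ) ^ 2 :=
      Finset.sum_congr rfl fun i _ => by ring
    have hsum : ∑ i : Fin d, θ i.succ * (θ i.succ - x i) =
        (∑ i : Fin d, θ i.succ * θ i.succ) - ∑ i : Fin d, θ i.succ * x i := by
      rw [← Finset.sum_sub_distrib]
      exact Finset.sum_congr rfl fun i _ => by ring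
    rwa [heq, hsum] at h
  have hat := gF_at hθ
  simp only [gF, sF_at hθ] at hat
  simp only [gF]
  nlinarith [mul_le_mul_of_nonneg_left hs ha0.le, mul_le_mul_of_nonneg_right hA.le hq0]

lemma fK_int {t : ℝ} (ht : 0 < t) : Integrable (fK θ t) := by
  have hμ : 0 < θ 0 - Real.sqrt (∑ i : Fin d, θ i.succ ^ 2) := by
    linarith [A_lt_a hθ]
  refine (integrable_exp_sF (t * (θ 0 - Real.sqrt (∑ i : Fin d, θ i.succ ^ 2)))
    (by positivity)).mono' (continuous_fK θ t).aestronglyMeasurable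
    (Filter.Eventually.of_forall fun x => ?_)
  have h1 : (θ 0 - Real.sqrt (∑ i : Fin d, θ i.succ ^ 2)) * sF x ≤ gF θ x := gF_lower x
  have h2 : fK θ t x ≤ Real.exp (-(t * gF θ x)) :=
    div_le_self (Real.exp_pos _).le (one_le_sF x)
  have h3 : Real.exp (-(t * gF θ x)) ≤
      Real.exp (-(t * (θ 0 - Real.sqrt (∑ i : Fin d, θ i.succ ^ 2)) * sF x)) := by
    apply Real.exp_le_exp.2
    have := mul_le_mul_of_nonneg_left h1 ht.le
    nlinarith
  rw [Real.norm_eq_abs, abs_of_pos (fK_pos θ t x)]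
  calc fK θ t x ≤ _ := h2
    _ ≤ _ := h3
    _ = _ := by ring_nf

end withθ

end HB

open MeasureTheory Topology
set_option maxHeartbeats 1000000
/-- if θ lies on the upper unit hyperboloid sheet
(θ₀ = √(1+θ₁²+⋯+θ_d²)), then P_{tθ} converges weakly to the Dirac mass at
(θ₁,…,θ_d) as t → +∞: the integral of every bounded continuous function converges. -/

theorem hyperboloid_tendsto_dirac (d : ℕ) (hd : 2 ≤ d) (θ : Fin (d + 1) → ℝ)
    (hθ : θ 0 = Real.sqrt (1 + ∑ i : Fin d, θ i.succ ^ 2)) :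
    ∀ φ : BoundedContinuousFunction (Fin d → ℝ) ℝ,
      Filter.Tendsto (fun t : ℝ => ∫ x, φ x ∂hypMeasure d (t • θ)) Filter.atTop
        (nhds (φ fun i => θ i.succ)) := by
  intro φ
  classical
  -- identify the kernel
  have hker : ∀ t : ℝ, hypKernel (t • θ) = HB.fK θ t := by
    intro t
    funext x
    have hmink : mink (t • θ) (hypLift x) = t * HB.gF θ x := by
      simp only [mink, hypLift, Fin.cons_zero, Fin.cons_succ, Pi.smul_apply, smul_eq_mul,
        HB.gF, HB.sF]
      have h1 : ∑ i : Fin d, t * θ i.succ * x i = t * ∑ i : Fin d, θ i.succ * x i := by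
        rw [Finset.mul_sum]
        exact Finset.sum_congr rfl fun i _ => by ring
      rw [h1]
      ring
    simp only [hypKernel, HB.fK, HB.sF, hmink]
  -- the integral formula
  have hform : ∀ t : ℝ, (∫ x, φ x ∂hypMeasure d (t • θ)) =
      (∫ x, φ x * HB.fK θ t x) / (∫ x, HB.fK θ t x) := by
    intro t
    have hZker : hypZ d (t • θ) = ∫ x, HB.fK θ t x := by
      simp only [hypZ, hker t]
    have hZnn : 0 ≤ hypZ d (t • θ) := by
      rw [hZker]
      exact integral_nonneg fun x => (HB.fK_pos θ t x).le
    have hDcont : Continuous (hypDensity d (t • θ)) := by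
      have e1 : hypDensity d (t • θ) = fun x => HB.fK θ t x / hypZ d (t • θ) := by
        funext x; simp only [hypDensity, hker t]
      rw [e1]
      exact (HB.continuous_fK θ t).div_const _
    have hDmeas : Measurable fun x => (hypDensity d (t • θ) x).toNNReal :=
      hDcont.measurable.real_toNNReal
    have h1 : (∫ x, φ x ∂hypMeasure d (t • θ)) =
        ∫ x, (hypDensity d (t • θ) x).toNNReal • φ x := by
      simp only [hypMeasure]
      exact integral_withDensity_eq_integral_smul hDmeas φ
    have h2 : (fun x => (hypDensity d (t • θ) x).toNNReal • φ x) =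
        fun x => φ x * HB.fK θ t x / (∫ x, HB.fK θ t x) := by
      funext x
      have hDnn : 0 ≤ hypDensity d (t • θ) x := by
        simp only [hypDensity]
        apply div_nonneg _ hZnn
        rw [hker t]
        exact (HB.fK_pos θ t x).le
      rw [NNReal.smul_def, Real.coe_toNNReal _ hDnn, smul_eq_mul]
      simp only [hypDensity, hker t, hZker]
      ring
    rw [h1, h2, integral_div]
  refine Filter.Tendsto.congr (fun t => (hform t).symm) ?_
  -- basic constants
  have ha1 : 1 ≤ θ 0 := HB.one_le_a hθ
  have ha0 : (0:ℝ) < θ 0 := by linarith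
  have hA0 : 0 ≤ Real.sqrt (∑ i : Fin d, θ i.succ ^ 2) := Real.sqrt_nonneg _
  have hAa : Real.sqrt (∑ i : Fin d, θ i.succ ^ 2) < θ 0 := HB.A_lt_a hθ
  set μ₀ : ℝ := θ 0 - Real.sqrt (∑ i : Fin d, θ i.succ ^ 2) with hμ₀def
  have hμ₀ : 0 < μ₀ := by rw [hμ₀def]; linarith
  rw [Metric.tendsto_atTop]
  intro ε hε
  set M : ℝ := ‖φ‖ with hMdef
  have hM0 : (0:ℝ) ≤ M := norm_nonneg φ
  have hMb : ∀ x, |φ x| ≤ M := fun x => by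
    simpa [Real.norm_eq_abs] using φ.norm_coe_le_norm x
  have hb2 : ∀ x, |φ x - φ (fun i => θ i.succ)| ≤ 2*M := by
    intro x
    calc |φ x - φ (fun i => θ i.succ)| ≤ |φ x| + |φ (fun i => θ i.succ)| := abs_sub _ _
      _ ≤ M + M := add_le_add (hMb x) (hMb _)
      _ = 2*M := by ring
  have hε4 : 0 < ε/4 := by linarith
  obtain ⟨δ, hδ0, hδ⟩ := Metric.continuousAt_iff.1
    (φ.continuous.continuousAt (x := fun i => θ i.succ)) (ε/4) hε4
  set B : Set (Fin d → ℝ) := {x | ∑ i : Fin d, (x i - θ i.succ) ^ 2 < δ ^ 2} with hBdef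
  have hBmeas : MeasurableSet B :=
    (isOpen_lt (continuous_finset_sum _ fun i _ =>
      ((continuous_apply i).sub continuous_const).pow 2) continuous_const).measurableSet
  have hφB : ∀ x ∈ B, |φ x - φ (fun i => θ i.succ)| < ε/4 := by
    intro x hx
    have hx' : ∑ i : Fin d, (x i - θ i.succ) ^ 2 < δ ^ 2 := hx
    have h2 : ‖x - fun i => θ i.succ‖ ≤ Real.sqrt (∑ i : Fin d, (x i - θ i.succ) ^ 2) := by
      exact HB.norm_le_sqrt (x - fun i => θ i.succ)
    have h3 : Real.sqrt (∑ i : Fin d, (x i - θ i.succ) ^ 2) < δ := (Real.sqrt_lt' hδ0).2 hx'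
    have h1 : dist x (fun i => θ i.succ) < δ := by
      rw [dist_eq_norm]; linarith
    have := hδ h1
    rwa [Real.dist_eq] at this
  -- the gap η outside B
  set R : ℝ := 2/μ₀ with hRdef
  have hR0 : 0 < R := by rw [hRdef]; positivity
  set η : ℝ := min 1 (δ^2/(2*θ 0*R)) with hηdef
  have hη0 : 0 < η := lt_min one_pos (by positivity)
  have hη1 : η ≤ 1 := min_le_left _ _
  have hgout : ∀ x, x ∉ B → 1 + η ≤ HB.gF θ x := by
    intro x hx
    have hx' : ¬ (∑ i : Fin d, (x i - θ i.succ) ^ 2 < δ ^ 2) := hx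
    have hQ : δ^2 ≤ ∑ i : Fin d, (x i - θ i.succ)^2 := not_lt.1 hx'
    have hg1 : 1 ≤ HB.gF θ x := HB.gF_ge_one hθ x
    by_cases hsx : HB.sF x ≤ R
    · have hkey := HB.gF_quad hθ x
      have hsp := HB.sF_pos x
      have h2 : δ^2 ≤ 2*θ 0*R*(HB.gF θ x - 1) := by
        nlinarith [mul_nonneg (mul_nonneg (by linarith : (0:ℝ) ≤ 2*θ 0)
          (by linarith : (0:ℝ) ≤ R - HB.sF x)) (by linarith : (0:ℝ) ≤ HB.gF θ x - 1)]
      have h3 : δ^2/(2*θ 0*R) ≤ HB.gF θ x - 1 := by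
        rw [div_le_iff₀ (by positivity)]; linarith
      have h4 : η ≤ δ^2/(2*θ 0*R) := min_le_right _ _
      linarith
    · push_neg at hsx
      have h5 := HB.gF_lower (θ := θ) x
      rw [← hμ₀def] at h5
      have h6 : μ₀ * R ≤ μ₀ * HB.sF x := mul_le_mul_of_nonneg_left hsx.le hμ₀.le
      have h7 : μ₀ * R = 2 := by rw [hRdef]; field_simp
      linarith
  -- the small ball E
  set r : ℝ := η/(4*θ 0) with hrdef
  have hr0 : 0 < r := by rw [hrdef]; positivity
  set E : Set (Fin d → ℝ) := {x | ∑ i : Fin d, (x i - θ i.succ)^2 < r^2} with hEdef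
  have hEmeas : MeasurableSet E :=
    (isOpen_lt (continuous_finset_sum _ fun i _ =>
      ((continuous_apply i).sub continuous_const).pow 2) continuous_const).measurableSet
  have hgE : ∀ x ∈ E, HB.gF θ x ≤ 1 + η/2 := by
    intro x hx
    have hx' : ∑ i : Fin d, (x i - θ i.succ)^2 < r^2 := hx
    have h1 := HB.gF_upper hθ x
    have h2 : Real.sqrt (∑ i : Fin d, (x i - θ i.succ)^2) ≤ r :=
      calc Real.sqrt (∑ i : Fin d, (x i - θ i.succ)^2) ≤ Real.sqrt (r^2) :=
            Real.sqrt_le_sqrt hx'.le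
        _ = r := Real.sqrt_sq hr0.le
    have h3 : 2*θ 0*r = η/2 := by rw [hrdef]; field_simp; ring
    have h4 := mul_le_mul_of_nonneg_left h2 (by linarith : (0:ℝ) ≤ 2*θ 0)
    linarith
  have hsE : ∀ x ∈ E, HB.sF x ≤ θ 0 + r := by
    intro x hx
    have hx' : ∑ i : Fin d, (x i - θ i.succ)^2 < r^2 := hx
    have h1 := HB.sF_upper x (fun i => θ i.succ)
    rw [HB.sF_at hθ] at h1
    have h1' : HB.sF x ≤ θ 0 + Real.sqrt (∑ i : Fin d, (x i - θ i.succ)^2) := by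
      simpa using h1
    have h2 : Real.sqrt (∑ i : Fin d, (x i - θ i.succ)^2) ≤ r :=
      calc Real.sqrt (∑ i : Fin d, (x i - θ i.succ)^2) ≤ Real.sqrt (r^2) :=
            Real.sqrt_le_sqrt hx'.le
        _ = r := Real.sqrt_sq hr0.le
    linarith
  -- volume of E
  have hball : Metric.ball (fun i => θ i.succ) (r/((d:ℝ)+1)) ⊆ E := by
    intro x hx
    rw [Metric.mem_ball] at hx
    show ∑ i : Fin d, (x i - θ i.succ)^2 < r^2
    have h1 : ∀ i : Fin d, (x i - θ i.succ)^2 ≤ (dist x (fun i => θ i.succ))^2 := by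
      intro i
      have h2 := dist_le_pi_dist x (fun i => θ i.succ) i
      have h3 : |x i - θ i.succ| ≤ dist x (fun i => θ i.succ) := by
        simpa [Real.dist_eq] using h2
      calc (x i - θ i.succ)^2 = |x i - θ i.succ|^2 := (sq_abs _).symm
        _ ≤ _ := pow_le_pow_left₀ (abs_nonneg _) h3 2
    have h4 : ∑ i : Fin d, (x i - θ i.succ)^2 ≤ (d:ℝ) * (dist x (fun i => θ i.succ))^2 := by
      calc ∑ i : Fin d, (x i - θ i.succ)^2
          ≤ ∑ _i : Fin d, (dist x (fun i => θ i.succ))^2 := Finset.sum_le_sum fun i _ => h1 i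
        _ = (d:ℝ) * (dist x (fun i => θ i.succ))^2 := by
            rw [Finset.sum_const, Finset.card_univ, Fintype.card_fin, nsmul_eq_mul]
    have h5 : (dist x (fun i => θ i.succ))^2 ≤ (r/((d:ℝ)+1))^2 :=
      pow_le_pow_left₀ dist_nonneg hx.le 2
    have h6 : (d:ℝ) * (r/((d:ℝ)+1))^2 < r^2 := by
      rw [div_pow, ← mul_div_assoc, div_lt_iff₀ (by positivity)]
      have hd1 : (d:ℝ) < ((d:ℝ)+1)^2 := by nlinarith [(Nat.cast_nonneg d : (0:ℝ) ≤ (d:ℝ))]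
      nlinarith [pow_pos hr0 2]
    have h7 : (d:ℝ) * (dist x (fun i => θ i.succ))^2 ≤ (d:ℝ) * (r/((d:ℝ)+1))^2 :=
      mul_le_mul_of_nonneg_left h5 (Nat.cast_nonneg d)
    linarith
  have hV0 : 0 < volume E :=
    lt_of_lt_of_le (Metric.measure_ball_pos volume _ (by positivity)) (measure_mono hball)
  have hEball : E ⊆ Metric.ball (fun i => θ i.succ) r := by
    intro x hx
    have hx' : ∑ i : Fin d, (x i - θ i.succ)^2 < r^2 := hx
    rw [Metric.mem_ball, dist_eq_norm]
    have h1 : ‖x - fun i => θ i.succ‖ ≤ Real.sqrt (∑ i : Fin d, (x i - θ i.succ)^2) := by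
      exact HB.norm_le_sqrt (x - fun i => θ i.succ)
    have h2 : Real.sqrt (∑ i : Fin d, (x i - θ i.succ)^2) < r := (Real.sqrt_lt' hr0).2 hx'
    linarith
  have hVtop : volume E < ⊤ := lt_of_le_of_lt (measure_mono hEball) measure_ball_lt_top
  -- lower bound on the partition function
  set c1 : ℝ := (volume E).toReal / (θ 0 + r) with hc1def
  have hc10 : 0 < c1 := by
    rw [hc1def]
    exact div_pos (ENNReal.toReal_pos hV0.ne' hVtop.ne) (by positivity)
  have hZlow : ∀ t : ℝ, 1 ≤ t → c1 * Real.exp (-(t*(1+η/2))) ≤ ∫ x, HB.fK θ t x := by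
    intro t ht
    have hint := HB.fK_int hθ (show (0:ℝ) < t by linarith)
    have hconst : ∀ x ∈ E, Real.exp (-(t*(1+η/2))) / (θ 0 + r) ≤ HB.fK θ t x := by
      intro x hx
      have hg := hgE x hx
      have h1 : Real.exp (-(t*(1+η/2))) ≤ Real.exp (-(t * HB.gF θ x)) := by
        apply Real.exp_le_exp.2
        have := mul_le_mul_of_nonneg_left hg (by linarith : (0:ℝ) ≤ t)
        linarith
      exact div_le_div₀ (Real.exp_pos _).le h1 (HB.sF_pos x) (hsE x hx)
    have h2 := setIntegral_ge_of_const_le_real hEmeas hVtop.ne hconst hint.integrableOn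
    have h3 : (∫ x in E, HB.fK θ t x) ≤ ∫ x, HB.fK θ t x :=
      setIntegral_le_integral hint (Filter.Eventually.of_forall fun x => (HB.fK_pos θ t x).le)
    calc c1 * Real.exp (-(t*(1+η/2)))
        = Real.exp (-(t*(1+η/2))) / (θ 0 + r) * (volume E).toReal := by rw [hc1def]; ring
      _ ≤ _ := le_trans h2 h3
  -- upper bound on the mass outside B
  have hZ1nn : 0 ≤ ∫ x, HB.fK θ 1 x := integral_nonneg fun x => (HB.fK_pos θ 1 x).le
  have hZoup : ∀ t : ℝ, 1 ≤ t →
      (∫ x in Bᶜ, HB.fK θ t x) ≤ Real.exp (-((t-1)*(1+η))) * ∫ x, HB.fK θ 1 x := by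
    intro t ht
    have hint1 := HB.fK_int hθ one_pos
    have hintt := HB.fK_int hθ (show (0:ℝ) < t by linarith)
    have hpt : ∀ x ∈ Bᶜ, HB.fK θ t x ≤ Real.exp (-((t-1)*(1+η))) * HB.fK θ 1 x := by
      intro x hx
      have hg := hgout x hx
      have hid : HB.fK θ t x = Real.exp (-((t-1) * HB.gF θ x)) * HB.fK θ 1 x := by
        simp only [HB.fK]
        rw [show -(t * HB.gF θ x) = -((t-1) * HB.gF θ x) + -(1 * HB.gF θ x) by ring,
          Real.exp_add, mul_div_assoc]
      rw [hid]
      apply mul_le_mul_of_nonneg_right _ (HB.fK_pos θ 1 x).le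
      apply Real.exp_le_exp.2
      have := mul_le_mul_of_nonneg_left hg (by linarith : (0:ℝ) ≤ t - 1)
      linarith
    have h1 : (∫ x in Bᶜ, HB.fK θ t x) ≤
        ∫ x in Bᶜ, Real.exp (-((t-1)*(1+η))) * HB.fK θ 1 x :=
      setIntegral_mono_on hintt.integrableOn (hint1.const_mul _).integrableOn hBmeas.compl hpt
    have h2 : (∫ x in Bᶜ, Real.exp (-((t-1)*(1+η))) * HB.fK θ 1 x)
        = Real.exp (-((t-1)*(1+η))) * ∫ x in Bᶜ, HB.fK θ 1 x := integral_const_mul _ _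
    have h3 : (∫ x in Bᶜ, HB.fK θ 1 x) ≤ ∫ x, HB.fK θ 1 x :=
      setIntegral_le_integral hint1 (Filter.Eventually.of_forall fun x => (HB.fK_pos θ 1 x).le)
    rw [h2] at h1
    exact le_trans h1 (mul_le_mul_of_nonneg_left h3 (Real.exp_pos _).le)
  -- numerator bound
  have hNum : ∀ t : ℝ, 1 ≤ t →
      |(∫ x, φ x * HB.fK θ t x) - φ (fun i => θ i.succ) * ∫ x, HB.fK θ t x| ≤
        ε/4 * (∫ x, HB.fK θ t x) + 2*M*(∫ x in Bᶜ, HB.fK θ t x) := by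
    intro t ht
    have hintt := HB.fK_int hθ (show (0:ℝ) < t by linarith)
    have hN : Integrable (fun x => φ x * HB.fK θ t x) :=
      hintt.bdd_mul φ.continuous.measurable.aestronglyMeasurable
        (Filter.Eventually.of_forall fun x => φ.norm_coe_le_norm x)
    have hsub : (∫ x, φ x * HB.fK θ t x) - φ (fun i => θ i.succ) * ∫ x, HB.fK θ t x
        = ∫ x, (φ x - φ (fun i => θ i.succ)) * HB.fK θ t x := by
      have e1 : (fun x => (φ x - φ (fun i => θ i.succ)) * HB.fK θ t x)
          = fun x => φ x * HB.fK θ t x - φ (fun i => θ i.succ) * HB.fK θ t x :=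
        funext fun x => by ring
      rw [e1, integral_sub hN (hintt.const_mul _), integral_const_mul]
    have hbound : ∀ x, |(φ x - φ (fun i => θ i.succ)) * HB.fK θ t x| ≤
        ε/4 * HB.fK θ t x + 2*M*(Bᶜ.indicator (HB.fK θ t) x) := by
      intro x
      rw [abs_mul, abs_of_pos (HB.fK_pos θ t x)]
      by_cases hx : x ∈ B
      · have h1 := (hφB x hx).le
        have h2 : 0 ≤ Bᶜ.indicator (HB.fK θ t) x :=
          Set.indicator_nonneg (fun y _ => (HB.fK_pos θ t y).le) x
        have h3 := mul_le_mul_of_nonneg_right h1 (HB.fK_pos θ t x).le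
        have h4 : 0 ≤ 2*M*(Bᶜ.indicator (HB.fK θ t) x) :=
          mul_nonneg (by linarith) h2
        linarith
      · rw [Set.indicator_of_mem (Set.mem_compl hx)]
        have h3 := mul_le_mul_of_nonneg_right (hb2 x) (HB.fK_pos θ t x).le
        have h4 : 0 ≤ ε/4 * HB.fK θ t x := mul_nonneg hε4.le (HB.fK_pos θ t x).le
        linarith
    have hint2 : Integrable
        (fun x => ε/4 * HB.fK θ t x + 2*M*(Bᶜ.indicator (HB.fK θ t) x)) :=
      (hintt.const_mul _).add ((hintt.indicator hBmeas.compl).const_mul _)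
    have hintabs : Integrable (fun x => |(φ x - φ (fun i => θ i.succ)) * HB.fK θ t x|) := by
      apply Integrable.abs
      exact hintt.bdd_mul ((φ.continuous.sub continuous_const).measurable.aestronglyMeasurable)
        (Filter.Eventually.of_forall fun x => by simpa [Real.norm_eq_abs] using hb2 x)
    rw [hsub]
    calc |∫ x, (φ x - φ (fun i => θ i.succ)) * HB.fK θ t x|
        ≤ ∫ x, |(φ x - φ (fun i => θ i.succ)) * HB.fK θ t x| := by
          simpa only [Real.norm_eq_abs] using
            norm_integral_le_integral_norm (μ := volume)
              (fun x => (φ x - φ (fun i => θ i.succ)) * HB.fK θ t x)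
      _ ≤ ∫ x, (ε/4 * HB.fK θ t x + 2*M*(Bᶜ.indicator (HB.fK θ t) x)) :=
          integral_mono hintabs hint2 hbound
      _ = _ := by
          rw [integral_add (hintt.const_mul _) ((hintt.indicator hBmeas.compl).const_mul _),
            integral_const_mul, integral_const_mul, integral_indicator hBmeas.compl]
  -- choose the threshold
  set C0 : ℝ := 2*M*(∫ x, HB.fK θ 1 x)*Real.exp (1+η)/c1 with hC0def
  have hC00 : 0 ≤ C0 := by
    rw [hC0def]
    apply div_nonneg _ hc10.le
    exact mul_nonneg (mul_nonneg (by linarith) hZ1nn) (Real.exp_pos _).le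
  have htendexp : Filter.Tendsto (fun t : ℝ => C0 * Real.exp (-(η/2*t)))
      Filter.atTop (𝓝 0) := by
    have h1 : Filter.Tendsto (fun t : ℝ => η/2*t) Filter.atTop Filter.atTop :=
      Filter.Tendsto.const_mul_atTop (by positivity) Filter.tendsto_id
    have h2 : Filter.Tendsto (fun t : ℝ => -(η/2*t)) Filter.atTop Filter.atBot :=
      Filter.tendsto_neg_atTop_atBot.comp h1
    have h3 : Filter.Tendsto (fun t : ℝ => Real.exp (-(η/2*t))) Filter.atTop (𝓝 0) :=
      Real.tendsto_exp_atBot.comp h2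
    simpa using h3.const_mul C0
  obtain ⟨T0, hT0⟩ := Filter.eventually_atTop.1 (htendexp.eventually_lt_const hε4)
  refine ⟨max T0 1, fun t ht => ?_⟩
  have ht1 : (1:ℝ) ≤ t := le_trans (le_max_right _ _) ht
  have htT : T0 ≤ t := le_trans (le_max_left _ _) ht
  have hZp : 0 < ∫ x, HB.fK θ t x := lt_of_lt_of_le (by positivity) (hZlow t ht1)
  have hZo_nn : 0 ≤ ∫ x in Bᶜ, HB.fK θ t x :=
    integral_nonneg fun x => (HB.fK_pos θ t x).le
  rw [Real.dist_eq]
  have hstep1 : |(∫ x, φ x * HB.fK θ t x) / (∫ x, HB.fK θ t x) - φ (fun i => θ i.succ)| ≤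
      ε/4 + 2*M*(∫ x in Bᶜ, HB.fK θ t x) / (∫ x, HB.fK θ t x) := by
    have heq : (∫ x, φ x * HB.fK θ t x) / (∫ x, HB.fK θ t x) - φ (fun i => θ i.succ)
        = ((∫ x, φ x * HB.fK θ t x) - φ (fun i => θ i.succ) * ∫ x, HB.fK θ t x)
          / (∫ x, HB.fK θ t x) := by
      field_simp
    rw [heq, abs_div, abs_of_pos hZp]
    calc _ ≤ (ε/4 * (∫ x, HB.fK θ t x) + 2*M*(∫ x in Bᶜ, HB.fK θ t x))
          / (∫ x, HB.fK θ t x) := (div_le_div_iff_of_pos_right hZp).2 (hNum t ht1)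
      _ = ε/4 + 2*M*(∫ x in Bᶜ, HB.fK θ t x) / (∫ x, HB.fK θ t x) := by
          rw [add_div, mul_div_assoc, div_self hZp.ne', mul_one]
  have hstep2 : 2*M*(∫ x in Bᶜ, HB.fK θ t x) / (∫ x, HB.fK θ t x) ≤
      C0 * Real.exp (-(η/2*t)) := by
    have h1 : 2*M*(∫ x in Bᶜ, HB.fK θ t x) ≤
        2*M*(Real.exp (-((t-1)*(1+η))) * ∫ x, HB.fK θ 1 x) :=
      mul_le_mul_of_nonneg_left (hZoup t ht1) (by linarith)
    have h2 := hZlow t ht1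
    have h3 : 2*M*(∫ x in Bᶜ, HB.fK θ t x) / (∫ x, HB.fK θ t x) ≤
        (2*M*(Real.exp (-((t-1)*(1+η))) * ∫ x, HB.fK θ 1 x))
          / (c1 * Real.exp (-(t*(1+η/2)))) :=
      div_le_div₀ (mul_nonneg (by linarith) (mul_nonneg (Real.exp_pos _).le hZ1nn))
        h1 (by positivity) h2
    have h4 : (2*M*(Real.exp (-((t-1)*(1+η))) * ∫ x, HB.fK θ 1 x))
          / (c1 * Real.exp (-(t*(1+η/2))))
        = C0 * Real.exp (-(η/2*t)) := by
      rw [hC0def, show Real.exp (-((t-1)*(1+η))) =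
          Real.exp (1+η) * Real.exp (-(η/2*t)) * Real.exp (-(t*(1+η/2))) by
        rw [← Real.exp_add, ← Real.exp_add]; congr 1; ring]
      field_simp
    rw [h4] at h3
    exact h3
  have hfinal := hT0 t htT
  calc |(∫ x, φ x * HB.fK θ t x) / (∫ x, HB.fK θ t x) - φ (fun i => θ i.succ)|
      ≤ ε/4 + 2*M*(∫ x in Bᶜ, HB.fK θ t x) / (∫ x, HB.fK θ t x) := hstep1
    _ ≤ ε/4 + C0 * Real.exp (-(η/2*t)) := by linarith
    _ < ε/4 + ε/4 := by linarith
    _ < ε := by linarith
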